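/- Let n ≥ 1, let σ be an invertible 2n×2n complex matrix with σᵀ = −σ, and let α ∈ ℂ^{2n}. Let β, β' ∈ ℂ^{2n} with βᵀσα = 0 and β'ᵀσα = 0, let κ, κ', ν, ν' ∈ ℂ. Let L and L' be 2n×2n matrices over ℂ((z)) of order ≥ −2 such that every coefficient matrix X of L or L' satisfies Xᵀσ + σX = 0 (i.e. L and L' take values in sp(2n)), and: L_{−2} = ν·α·αᵀ·σ, L_{−1} = (α·βᵀ + β·αᵀ)·σ, L_0·α = κ·α, αᵀσL_1α = 0, and the analogous conditions for L' with ν', β', κ'. Then the commutator [L,L'] = L·L' − L'·L has order ≥ −2, every coefficient matrix Y of [L,L'] satisfies Yᵀσ + σY = 0, and there exist ν'' ∈ ℂ, β'' ∈ ℂ^{2n} and κ'' ∈ ℂ such that [L,L']_{−2} = ν''·α·αᵀ·σ, [L,L']_{−1} = (α·β''ᵀ + β''·αᵀ)·σ with β''ᵀσα = 0, [L,L']_0·α = κ''·α, and αᵀσ[L,L']_1α = 0. (This is the sp(2n) case of the theorem that the space of Lax operators is closed under the pointwise commutator, localized at a Tyurin point γ.) -/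

import Mathlib

open Matrix

/-- The matrix of `z^k`-coefficients of a matrix of formal Laurent series. -/
noncomputable def coeffM {n : ℕ} (A : Matrix (Fin n) (Fin n) (LaurentSeries ℂ)) (k : ℤ) :
    Matrix (Fin n) (Fin n) ℂ :=
  fun i j => (A i j).coeff k

/-- `A` has order `≥ m`: all coefficients below `m` vanish. -/
def ordGE {n : ℕ} (A : Matrix (Fin n) (Fin n) (LaurentSeries ℂ)) (m : ℤ) : Prop :=
  ∀ k : ℤ, k < m → coeffM A k = 0

lemma lax_coeff_mul (f g : LaurentSeries ℂ)
    (hf : ∀ i : ℤ, i < -2 → f.coeff i = 0) (hg : ∀ i : ℤ, i < -2 → g.coeff i = 0) (k : ℤ) :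
    (f * g).coeff k = ∑ i ∈ Finset.Icc (-2 : ℤ) (k + 2), f.coeff i * g.coeff (k - i) := by
  classical
  rw [HahnSeries.coeff_mul]
  have h1 : ∑ i ∈ Finset.Icc (-2 : ℤ) (k + 2), f.coeff i * g.coeff (k - i)
      = ∑ p ∈ (Finset.Icc (-2 : ℤ) (k + 2)).image (fun i => (i, k - i)),
          f.coeff p.1 * g.coeff p.2 := by
    rw [Finset.sum_image]
    intro x _ y _ h
    exact (Prod.mk.injEq _ _ _ _ ▸ h :
      x = y ∧ k - x = k - y).1
  rw [h1]
  apply Finset.sum_subset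
  · intro p hp
    rw [Finset.mem_addAntidiagonal] at hp
    obtain ⟨h1, h2, h3⟩ := hp
    rw [Finset.mem_image]
    refine ⟨p.1, ?_, ?_⟩
    · rw [Finset.mem_Icc]
      constructor
      · by_contra h; exact h1 (hf p.1 (by omega))
      · have : -2 ≤ p.2 := by
          by_contra h; exact h2 (hg p.2 (by omega))
        omega
    · exact Prod.ext rfl (by omega)
  · intro p hp hnp
    obtain ⟨i, _, rfl⟩ := Finset.mem_image.mp hp
    by_contra h
    apply hnp
    rw [Finset.mem_addAntidiagonal]
    refine ⟨?_, ?_, by ring⟩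
    · simp only [HahnSeries.mem_support]
      intro h0; exact h (by simp [h0])
    · simp only [HahnSeries.mem_support]
      intro h0; exact h (by simp [h0])

lemma coeffM_mul {m : ℕ} (A B : Matrix (Fin m) (Fin m) (LaurentSeries ℂ))
    (hA : ordGE A (-2)) (hB : ordGE B (-2)) (k : ℤ) :
    coeffM (A * B) k = ∑ i ∈ Finset.Icc (-2 : ℤ) (k + 2), coeffM A i * coeffM B (k - i) := by
  ext p q
  have e1 : coeffM (A * B) k p q = (∑ l, A p l * B l q).coeff k := by
    simp [coeffM, Matrix.mul_apply]
  have e15 : (∑ l, A p l * B l q).coeff k = ∑ l, (A p l * B l q).coeff k :=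
    map_sum (HahnSeries.coeff.addMonoidHom k) _ _
  rw [e1, e15]
  have e2 : ∀ l, (A p l * B l q).coeff k
      = ∑ i ∈ Finset.Icc (-2 : ℤ) (k + 2), (A p l).coeff i * (B l q).coeff (k - i) := by
    intro l
    exact lax_coeff_mul _ _
      (fun i hi => by have := congrFun (congrFun (hA i hi) p) l; simpa [coeffM] using this)
      (fun i hi => by have := congrFun (congrFun (hB i hi) l) q; simpa [coeffM] using this) k
  rw [Finset.sum_congr rfl (fun l _ => e2 l), Finset.sum_comm]
  show _ = (∑ c ∈ Finset.Icc (-2:ℤ) (k + 2), coeffM A c * coeffM B (k - c)) p q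
  rw [Matrix.sum_apply]
  exact Finset.sum_congr rfl fun i _ => by simp [Matrix.mul_apply, coeffM]

lemma coeffM_sub {m : ℕ} (A B : Matrix (Fin m) (Fin m) (LaurentSeries ℂ)) (k : ℤ) :
    coeffM (A - B) k = coeffM A k - coeffM B k := by
  ext p q; simp [coeffM, HahnSeries.coeff_sub]

lemma coeffM_comm {m : ℕ} (A B : Matrix (Fin m) (Fin m) (LaurentSeries ℂ))
    (hA : ordGE A (-2)) (hB : ordGE B (-2)) (k : ℤ) :
    coeffM (A * B - B * A) k =
      ∑ i ∈ Finset.Icc (-2 : ℤ) (k + 2),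
        (coeffM A i * coeffM B (k - i) - coeffM B (k - i) * coeffM A i) := by
  rw [coeffM_sub, coeffM_mul A B hA hB, coeffM_mul B A hB hA]
  have e : ∑ j ∈ Finset.Icc (-2 : ℤ) (k + 2), coeffM B j * coeffM A (k - j)
      = ∑ j ∈ Finset.Icc (-2 : ℤ) (k + 2), coeffM B (k - j) * coeffM A j := by
    apply Finset.sum_equiv (Equiv.subLeft k)
    · intro j; simp only [Finset.mem_Icc, Equiv.subLeft_apply]; omega
    · intro j _; simp [Equiv.subLeft_apply]
  rw [e, ← Finset.sum_sub_distrib]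

section MatAlg
variable {m : ℕ}

lemma vmv_mul (a b : Fin m → ℂ) (M : Matrix (Fin m) (Fin m) ℂ) :
    vecMulVec a b * M = vecMulVec a (Mᵀ *ᵥ b) := by
  ext i j
  simp only [vecMulVec_apply, Matrix.mul_apply, mulVec, dotProduct, transpose_apply]
  rw [Finset.mul_sum]
  exact Finset.sum_congr rfl fun l _ => by ring

lemma mul_vmv (M : Matrix (Fin m) (Fin m) ℂ) (a b : Fin m → ℂ) :
    M * vecMulVec a b = vecMulVec (M *ᵥ a) b := by
  ext i j
  simp only [vecMulVec_apply, Matrix.mul_apply, mulVec, dotProduct]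
  rw [Finset.sum_mul]
  exact Finset.sum_congr rfl fun l _ => by ring

lemma vmv_mulVec (a b v : Fin m → ℂ) : vecMulVec a b *ᵥ v = (b ⬝ᵥ v) • a := by
  ext i
  simp only [mulVec, dotProduct, vecMulVec_apply, Pi.smul_apply, smul_eq_mul]
  rw [Finset.sum_mul]
  exact Finset.sum_congr rfl fun l _ => by ring

lemma vmv_smul_left (r : ℂ) (a b : Fin m → ℂ) :
    vecMulVec (r • a) b = r • vecMulVec a b := by
  ext i j; simp [vecMulVec_apply, mul_assoc]

lemma vmv_smul_right (r : ℂ) (a b : Fin m → ℂ) :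
    vecMulVec a (r • b) = r • vecMulVec a b := by
  ext i j; simp [vecMulVec_apply]; ring

lemma vmv_neg_right (a b : Fin m → ℂ) : vecMulVec a (-b) = -vecMulVec a b := by
  ext i j; simp [vecMulVec_apply]

lemma vmv_neg_left (a b : Fin m → ℂ) : vecMulVec (-a) b = -vecMulVec a b := by
  ext i j; simp [vecMulVec_apply]

lemma vmv_add_left (a a' b : Fin m → ℂ) :
    vecMulVec (a + a') b = vecMulVec a b + vecMulVec a' b := by
  ext i j; simp [vecMulVec_apply]; ring

lemma vmv_add_right (a b b' : Fin m → ℂ) :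
    vecMulVec a (b + b') = vecMulVec a b + vecMulVec a b' := by
  ext i j; simp [vecMulVec_apply]; ring

lemma vmv_sub_left (a a' b : Fin m → ℂ) :
    vecMulVec (a - a') b = vecMulVec a b - vecMulVec a' b := by
  ext i j; simp [vecMulVec_apply]; ring

lemma vmv_sub_right (a b b' : Fin m → ℂ) :
    vecMulVec a (b - b') = vecMulVec a b - vecMulVec a b' := by
  ext i j; simp [vecMulVec_apply]; ring

lemma vmv_vmv (a b c d : Fin m → ℂ) :
    vecMulVec a b * vecMulVec c d = (b ⬝ᵥ c) • vecMulVec a d := by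
  rw [mul_vmv, vmv_mulVec, vmv_smul_left]

variable (σ : Matrix (Fin m) (Fin m) ℂ)

lemma skew_dot (hσ : σᵀ = -σ) (v w : Fin m → ℂ) : v ⬝ᵥ σ *ᵥ w = -(w ⬝ᵥ σ *ᵥ v) := by
  rw [dotProduct_mulVec, ← mulVec_transpose, hσ, neg_mulVec, neg_dotProduct, dotProduct_comm]

lemma vmv_sigma (hσ : σᵀ = -σ) (a w : Fin m → ℂ) :
    vecMulVec a (σ *ᵥ w) = -(vecMulVec a w * σ) := by
  rw [vmv_mul, hσ, neg_mulVec, vmv_neg_right, neg_neg]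

lemma sp_symm (hσ : σᵀ = -σ) (X : Matrix (Fin m) (Fin m) ℂ) (hX : Xᵀ * σ + σ * X = 0) :
    (σ * X)ᵀ = σ * X := by
  rw [transpose_mul, hσ, mul_neg, eq_neg_of_add_eq_zero_left hX, neg_neg]

lemma PmulX (hσ : σᵀ = -σ) (X : Matrix (Fin m) (Fin m) ℂ) (hX : Xᵀ * σ + σ * X = 0)
    (a b : Fin m → ℂ) :
    (vecMulVec a b * σ) * X = -(vecMulVec a (X *ᵥ b) * σ) := by
  rw [mul_assoc, vmv_mul, sp_symm σ hσ X hX, ← mulVec_mulVec, vmv_sigma σ hσ]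

lemma XmulP (X : Matrix (Fin m) (Fin m) ℂ) (a b : Fin m → ℂ) :
    X * (vecMulVec a b * σ) = vecMulVec (X *ᵥ a) b * σ := by
  rw [← mul_assoc, mul_vmv]

lemma PmulQ (a b c d : Fin m → ℂ) :
    (vecMulVec a b * σ) * (vecMulVec c d * σ) = (b ⬝ᵥ σ *ᵥ c) • (vecMulVec a d * σ) := by
  rw [mul_assoc, ← mul_assoc σ, mul_vmv, ← mul_assoc, vmv_vmv, smul_mul_assoc]

lemma dot2 (X : Matrix (Fin m) (Fin m) ℂ) (hX : Xᵀ * σ + σ * X = 0) (a b : Fin m → ℂ) :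
    (X *ᵥ b) ⬝ᵥ (σ *ᵥ a) = -(b ⬝ᵥ σ *ᵥ (X *ᵥ a)) := by
  calc (X *ᵥ b) ⬝ᵥ (σ *ᵥ a) = (b ᵥ* Xᵀ) ⬝ᵥ (σ *ᵥ a) := by rw [vecMul_transpose]
    _ = b ⬝ᵥ Xᵀ *ᵥ (σ *ᵥ a) := (dotProduct_mulVec _ _ _).symm
    _ = b ⬝ᵥ (Xᵀ * σ) *ᵥ a := by rw [mulVec_mulVec]
    _ = b ⬝ᵥ (-(σ * X)) *ᵥ a := by rw [eq_neg_of_add_eq_zero_left hX]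
    _ = -(b ⬝ᵥ σ *ᵥ (X *ᵥ a)) := by rw [neg_mulVec, dotProduct_neg, ← mulVec_mulVec]

lemma sp_bracket (A B : Matrix (Fin m) (Fin m) ℂ)
    (hA : Aᵀ * σ + σ * A = 0) (hB : Bᵀ * σ + σ * B = 0) :
    (A * B - B * A)ᵀ * σ + σ * (A * B - B * A) = 0 := by
  have hA' : Aᵀ * σ = -(σ * A) := eq_neg_of_add_eq_zero_left hA
  have hB' : Bᵀ * σ = -(σ * B) := eq_neg_of_add_eq_zero_left hB
  have e1 : Bᵀ * Aᵀ * σ = σ * (B * A) := by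
    rw [mul_assoc, hA', mul_neg, ← mul_assoc, hB', neg_mul, neg_neg, mul_assoc]
  have e2 : Aᵀ * Bᵀ * σ = σ * (A * B) := by
    rw [mul_assoc, hB', mul_neg, ← mul_assoc, hA', neg_mul, neg_neg, mul_assoc]
  rw [transpose_sub, transpose_mul, transpose_mul, sub_mul, mul_sub, e1, e2]
  abel

lemma bracket_S_X' (hσ : σᵀ = -σ) (α : Fin m → ℂ) (X : Matrix (Fin m) (Fin m) ℂ)
    (hX : Xᵀ * σ + σ * X = 0) :
    (vecMulVec α α * σ) * X - X * (vecMulVec α α * σ)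
      = -((vecMulVec α (X *ᵥ α) + vecMulVec (X *ᵥ α) α) * σ) := by
  rw [PmulX σ hσ X hX, XmulP, add_mul, neg_add]
  abel

lemma bracket_S_X (hσ : σᵀ = -σ) (α : Fin m → ℂ) (X : Matrix (Fin m) (Fin m) ℂ)
    (hX : Xᵀ * σ + σ * X = 0) (κ₀ : ℂ) (hX0 : X *ᵥ α = κ₀ • α) (ν₀ : ℂ) :
    (ν₀ • (vecMulVec α α * σ)) * X - X * (ν₀ • (vecMulVec α α * σ))
      = (-(2 * (ν₀ * κ₀))) • (vecMulVec α α * σ) := by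
  rw [smul_mul_assoc, mul_smul_comm, ← smul_sub, bracket_S_X' σ hσ α X hX, hX0,
    vmv_smul_left, vmv_smul_right]
  simp only [add_mul, smul_mul_assoc, neg_add, smul_add, smul_neg, smul_smul]
  module

lemma bracket_T_X (hσ : σᵀ = -σ) (α b : Fin m → ℂ) (X : Matrix (Fin m) (Fin m) ℂ)
    (hX : Xᵀ * σ + σ * X = 0) (κ₀ : ℂ) (hX0 : X *ᵥ α = κ₀ • α) :
    ((vecMulVec α b + vecMulVec b α) * σ) * X - X * ((vecMulVec α b + vecMulVec b α) * σ)
      = -((vecMulVec α (X *ᵥ b) + vecMulVec (X *ᵥ b) α) * σ)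
        - κ₀ • ((vecMulVec α b + vecMulVec b α) * σ) := by
  rw [add_mul (vecMulVec α b) (vecMulVec b α) σ, add_mul _ _ X,
    PmulX σ hσ X hX α b, PmulX σ hσ X hX b α, mul_add,
    XmulP σ X α b, XmulP σ X b α, hX0, vmv_smul_left, vmv_smul_right]
  simp only [add_mul, smul_mul_assoc, neg_add, smul_add, smul_neg, smul_smul]
  module

lemma bracket_T_T' (α b b' : Fin m → ℂ)
    (h1 : α ⬝ᵥ σ *ᵥ α = 0) (hb : b ⬝ᵥ σ *ᵥ α = 0)
    (hab' : α ⬝ᵥ σ *ᵥ b' = 0) :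
    ((vecMulVec α b + vecMulVec b α) * σ) * ((vecMulVec α b' + vecMulVec b' α) * σ)
      = (b ⬝ᵥ σ *ᵥ b') • (vecMulVec α α * σ) := by
  rw [add_mul (vecMulVec α b') (vecMulVec b' α) σ,
    add_mul (vecMulVec α b) (vecMulVec b α) σ, add_mul, mul_add, mul_add,
    PmulQ, PmulQ, PmulQ, PmulQ, hb, h1, hab', zero_smul, zero_smul, zero_smul]
  simp

end MatAlg

/-- The `sp(2n)` case of closedness of the space of Lax operators under the pointwise
commutator, localized at a Tyurin point. -/
theorem lax_sp_commutator_closed (n : ℕ) (hn : 1 ≤ n)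
    (σ : Matrix (Fin (2 * n)) (Fin (2 * n)) ℂ) (hσdet : IsUnit σ.det) (hσskew : σᵀ = -σ)
    (α : Fin (2 * n) → ℂ)
    (β β' : Fin (2 * n) → ℂ)
    (hβα : β ⬝ᵥ σ.mulVec α = 0) (hβ'α : β' ⬝ᵥ σ.mulVec α = 0)
    (κ κ' ν ν' : ℂ)
    (L L' : Matrix (Fin (2 * n)) (Fin (2 * n)) (LaurentSeries ℂ))
    (hLord : ordGE L (-2)) (hL'ord : ordGE L' (-2))
    (hLsp : ∀ k : ℤ, (coeffM L k)ᵀ * σ + σ * coeffM L k = 0)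
    (hL'sp : ∀ k : ℤ, (coeffM L' k)ᵀ * σ + σ * coeffM L' k = 0)
    (hLm2 : coeffM L (-2) = ν • (vecMulVec α α * σ))
    (hL'm2 : coeffM L' (-2) = ν' • (vecMulVec α α * σ))
    (hLm1 : coeffM L (-1) = (vecMulVec α β + vecMulVec β α) * σ)
    (hL'm1 : coeffM L' (-1) = (vecMulVec α β' + vecMulVec β' α) * σ)
    (hL0 : (coeffM L 0).mulVec α = κ • α)
    (hL'0 : (coeffM L' 0).mulVec α = κ' • α)
    (hL1 : α ⬝ᵥ (σ * coeffM L 1).mulVec α = 0)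
    (hL'1 : α ⬝ᵥ (σ * coeffM L' 1).mulVec α = 0) :
    ordGE (L * L' - L' * L) (-2) ∧
    (∀ k : ℤ, (coeffM (L * L' - L' * L) k)ᵀ * σ + σ * coeffM (L * L' - L' * L) k = 0) ∧
    ∃ (ν'' : ℂ) (β'' : Fin (2 * n) → ℂ) (κ'' : ℂ),
      coeffM (L * L' - L' * L) (-2) = ν'' • (vecMulVec α α * σ) ∧
      coeffM (L * L' - L' * L) (-1) = (vecMulVec α β'' + vecMulVec β'' α) * σ ∧
      β'' ⬝ᵥ σ.mulVec α = 0 ∧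
      (coeffM (L * L' - L' * L) 0).mulVec α = κ'' • α ∧
      α ⬝ᵥ (σ * coeffM (L * L' - L' * L) 1).mulVec α = 0 := by
  classical
  have hσα : α ⬝ᵥ σ *ᵥ α = 0 := by
    have h := skew_dot σ hσskew α α
    have h2 : (2 : ℂ) * (α ⬝ᵥ σ *ᵥ α) = 0 := by linear_combination h
    simpa using (mul_eq_zero.mp h2).resolve_left two_ne_zero
  have hαβ : α ⬝ᵥ σ *ᵥ β = 0 := by rw [skew_dot σ hσskew, hβα, neg_zero]
  have hαβ' : α ⬝ᵥ σ *ᵥ β' = 0 := by rw [skew_dot σ hσskew, hβ'α, neg_zero]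
  have key := coeffM_comm L L' hLord hL'ord
  have hSw : ∀ w, (vecMulVec α α * σ) *ᵥ w = (α ⬝ᵥ σ *ᵥ w) • α := fun w => by
    rw [← mulVec_mulVec, vmv_mulVec]
  have hTw : ∀ b w : Fin (2 * n) → ℂ, ((vecMulVec α b + vecMulVec b α) * σ) *ᵥ w
      = (b ⬝ᵥ σ *ᵥ w) • α + (α ⬝ᵥ σ *ᵥ w) • b := fun b w => by
    rw [add_mul, Matrix.add_mulVec, ← mulVec_mulVec, ← mulVec_mulVec, vmv_mulVec, vmv_mulVec]
  have hz1 : α ⬝ᵥ σ *ᵥ (coeffM L 1 *ᵥ α) = 0 := by rw [mulVec_mulVec]; exact hL1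
  have hz1' : α ⬝ᵥ σ *ᵥ (coeffM L' 1 *ᵥ α) = 0 := by rw [mulVec_mulVec]; exact hL'1
  have hSP : ∀ b : Fin (2 * n) → ℂ, α ⬝ᵥ σ *ᵥ b = 0 →
      (vecMulVec α α * σ) * ((vecMulVec α b + vecMulVec b α) * σ) = 0 := by
    intro b hb
    rw [add_mul (vecMulVec α b) (vecMulVec b α) σ, mul_add, PmulQ, PmulQ, hσα, hb,
      zero_smul, zero_smul, add_zero]
  have hPS : ∀ b : Fin (2 * n) → ℂ, b ⬝ᵥ σ *ᵥ α = 0 →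
      ((vecMulVec α b + vecMulVec b α) * σ) * (vecMulVec α α * σ) = 0 := by
    intro b hb
    rw [add_mul (vecMulVec α b) (vecMulVec b α) σ, add_mul, PmulQ, PmulQ, hb, hσα,
      zero_smul, zero_smul, add_zero]
  refine ⟨?_, ?_, ?_⟩
  · -- order ≥ -2
    intro k hk
    rw [key k]
    rcases lt_trichotomy k (-4) with h | h | h
    · rw [Finset.Icc_eq_empty (by omega), Finset.sum_empty]
    · subst h
      rw [show (-4 : ℤ) + 2 = -2 by norm_num, Finset.Icc_self, Finset.sum_singleton,
        show (-4 : ℤ) - -2 = -2 by norm_num, hLm2, hL'm2,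
        smul_mul_assoc, smul_mul_assoc, mul_smul_comm, mul_smul_comm,
        smul_smul, smul_smul, mul_comm ν' ν, sub_self]
    · have hk3 : k = -3 := by omega
      subst hk3
      rw [show (-3 : ℤ) + 2 = -1 by norm_num,
        show Finset.Icc (-2 : ℤ) (-1) = {-2, -1} by decide,
        Finset.sum_insert (by decide), Finset.sum_singleton,
        show (-3 : ℤ) - -2 = -1 by norm_num, show (-3 : ℤ) - -1 = -2 by norm_num,
        hLm2, hL'm2, hLm1, hL'm1]
      simp only [smul_mul_assoc, mul_smul_comm, hSP β' hαβ', hPS β' hβ'α, hSP β hαβ,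
        hPS β hβα, smul_zero, sub_self, add_zero, zero_add, sub_zero, zero_sub, neg_zero]
  · -- sp-valued
    intro k
    rw [key k, Matrix.transpose_sum, Finset.sum_mul, Finset.mul_sum, ← Finset.sum_add_distrib]
    exact Finset.sum_eq_zero fun i _ => sp_bracket σ _ _ (hLsp i) (hL'sp (k - i))
  · refine ⟨-(2 * (ν * κ')) + (2 * (ν' * κ)) + (β ⬝ᵥ σ *ᵥ β' - β' ⬝ᵥ σ *ᵥ β),
      κ • β' - κ' • β + (coeffM L 0 *ᵥ β' - coeffM L' 0 *ᵥ β)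
        + (ν' • (coeffM L 1 *ᵥ α) - ν • (coeffM L' 1 *ᵥ α)),
      ν * (α ⬝ᵥ σ *ᵥ (coeffM L' 2 *ᵥ α)) - ν' * (α ⬝ᵥ σ *ᵥ (coeffM L 2 *ᵥ α))
        + (β ⬝ᵥ σ *ᵥ (coeffM L' 1 *ᵥ α) - β' ⬝ᵥ σ *ᵥ (coeffM L 1 *ᵥ α)),
      ?_, ?_, ?_, ?_, ?_⟩
    · -- coefficient -2
      rw [key (-2), show (-2 : ℤ) + 2 = 0 by norm_num,
        show Finset.Icc (-2 : ℤ) 0 = {-2, -1, 0} by decide,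
        Finset.sum_insert (by decide), Finset.sum_insert (by decide), Finset.sum_singleton,
        show (-2 : ℤ) - -2 = 0 by norm_num, show (-2 : ℤ) - -1 = -1 by norm_num,
        show (-2 : ℤ) - 0 = -2 by norm_num, hLm2, hL'm2, hLm1, hL'm1,
        bracket_S_X σ hσskew α (coeffM L' 0) (hL'sp 0) κ' hL'0 ν,
        bracket_T_T' σ α β β' hσα hβα hαβ',
        bracket_T_T' σ α β' β hσα hβ'α hαβ]
      have e3 : coeffM L 0 * (ν' • (vecMulVec α α * σ))
          - ν' • (vecMulVec α α * σ) * coeffM L 0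
          = (2 * (ν' * κ)) • (vecMulVec α α * σ) := by
        rw [← neg_sub, bracket_S_X σ hσskew α (coeffM L 0) (hLsp 0) κ hL0 ν']
        module
      rw [e3]
      module
    · -- coefficient -1
      rw [key (-1), show (-1 : ℤ) + 2 = 1 by norm_num,
        show Finset.Icc (-2 : ℤ) 1 = {-2, -1, 0, 1} by decide,
        Finset.sum_insert (by decide), Finset.sum_insert (by decide),
        Finset.sum_insert (by decide), Finset.sum_singleton,
        show (-1 : ℤ) - -2 = 1 by norm_num, show (-1 : ℤ) - -1 = 0 by norm_num,
        show (-1 : ℤ) - 0 = -1 by norm_num, show (-1 : ℤ) - 1 = -2 by norm_num,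
        hLm2, hL'm2, hLm1, hL'm1]
      have b1 : (ν • (vecMulVec α α * σ)) * coeffM L' 1 - coeffM L' 1 * (ν • (vecMulVec α α * σ))
          = -(ν • ((vecMulVec α (coeffM L' 1 *ᵥ α) + vecMulVec (coeffM L' 1 *ᵥ α) α) * σ)) := by
        rw [smul_mul_assoc, mul_smul_comm, ← smul_sub,
          bracket_S_X' σ hσskew α (coeffM L' 1) (hL'sp 1), smul_neg]
      have b3 : coeffM L 0 * ((vecMulVec α β' + vecMulVec β' α) * σ)
          - (vecMulVec α β' + vecMulVec β' α) * σ * coeffM L 0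
          = ((vecMulVec α (coeffM L 0 *ᵥ β') + vecMulVec (coeffM L 0 *ᵥ β') α) * σ)
            + κ • ((vecMulVec α β' + vecMulVec β' α) * σ) := by
        rw [← neg_sub, bracket_T_X σ hσskew α β' (coeffM L 0) (hLsp 0) κ hL0]
        module
      have b4 : coeffM L 1 * (ν' • (vecMulVec α α * σ))
          - (ν' • (vecMulVec α α * σ)) * coeffM L 1
          = ν' • ((vecMulVec α (coeffM L 1 *ᵥ α) + vecMulVec (coeffM L 1 *ᵥ α) α) * σ) := by
        rw [mul_smul_comm, smul_mul_assoc, ← smul_sub, ← neg_sub,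
          bracket_S_X' σ hσskew α (coeffM L 1) (hLsp 1), neg_neg]
      rw [b1, bracket_T_X σ hσskew α β (coeffM L' 0) (hL'sp 0) κ' hL'0, b3, b4]
      simp only [vmv_add_right, vmv_add_left, vmv_sub_right, vmv_sub_left, vmv_smul_right,
        vmv_smul_left, add_mul, sub_mul, smul_mul_assoc, neg_mul, smul_add, neg_add,
        smul_neg, smul_smul]
      module
    · -- orthogonality of β''
      have d1 : (coeffM L 0 *ᵥ β') ⬝ᵥ (σ *ᵥ α) = 0 := by
        rw [dot2 σ (coeffM L 0) (hLsp 0) α β', hL0, mulVec_smul, dotProduct_smul, hβ'α,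
          smul_zero, neg_zero]
      have d2 : (coeffM L' 0 *ᵥ β) ⬝ᵥ (σ *ᵥ α) = 0 := by
        rw [dot2 σ (coeffM L' 0) (hL'sp 0) α β, hL'0, mulVec_smul, dotProduct_smul, hβα,
          smul_zero, neg_zero]
      have d3 : (coeffM L 1 *ᵥ α) ⬝ᵥ (σ *ᵥ α) = 0 := by
        rw [dot2 σ (coeffM L 1) (hLsp 1) α α, hz1, neg_zero]
      have d4 : (coeffM L' 1 *ᵥ α) ⬝ᵥ (σ *ᵥ α) = 0 := by
        rw [dot2 σ (coeffM L' 1) (hL'sp 1) α α, hz1', neg_zero]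
      simp only [add_dotProduct, sub_dotProduct, smul_dotProduct,
        d1, d2, d3, d4, hβα, hβ'α, smul_zero, add_zero, sub_zero, sub_self, zero_add]
    · -- coefficient 0
      rw [key 0, show (0 : ℤ) + 2 = 2 by norm_num,
        show Finset.Icc (-2 : ℤ) 2 = {-2, -1, 0, 1, 2} by decide,
        Finset.sum_insert (by decide), Finset.sum_insert (by decide),
        Finset.sum_insert (by decide), Finset.sum_insert (by decide), Finset.sum_singleton,
        show (0 : ℤ) - -2 = 2 by norm_num, show (0 : ℤ) - -1 = 1 by norm_num,
        show (0 : ℤ) - 0 = 0 by norm_num, show (0 : ℤ) - 1 = -1 by norm_num,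
        show (0 : ℤ) - 2 = -2 by norm_num,
        hLm2, hL'm2, hLm1, hL'm1]
      simp only [Matrix.add_mulVec, Matrix.sub_mulVec, ← mulVec_mulVec,
        smul_mulVec, hSw, hTw, hL0, hL'0, mulVec_smul, mulVec_zero,
        hz1, hz1', hσα, hβα, hβ'α, zero_smul, smul_zero, add_zero, zero_add, sub_zero,
        zero_sub]
      module
    · -- coefficient 1
      have k10 : α ⬝ᵥ σ *ᵥ (coeffM L 0 *ᵥ (coeffM L' 1 *ᵥ α)) = 0 := by
        have h := dot2 σ (coeffM L 0) (hLsp 0) (coeffM L' 1 *ᵥ α) α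
        rw [hL0, smul_dotProduct, hz1', smul_zero] at h
        exact (neg_eq_zero.mp h.symm)
      have k10' : α ⬝ᵥ σ *ᵥ (coeffM L' 0 *ᵥ (coeffM L 1 *ᵥ α)) = 0 := by
        have h := dot2 σ (coeffM L' 0) (hL'sp 0) (coeffM L 1 *ᵥ α) α
        rw [hL'0, smul_dotProduct, hz1, smul_zero] at h
        exact (neg_eq_zero.mp h.symm)
      rw [← mulVec_mulVec, key 1, show (1 : ℤ) + 2 = 3 by norm_num,
        show Finset.Icc (-2 : ℤ) 3 = {-2, -1, 0, 1, 2, 3} by decide,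
        Finset.sum_insert (by decide), Finset.sum_insert (by decide),
        Finset.sum_insert (by decide), Finset.sum_insert (by decide),
        Finset.sum_insert (by decide), Finset.sum_singleton,
        show (1 : ℤ) - -2 = 3 by norm_num, show (1 : ℤ) - -1 = 2 by norm_num,
        show (1 : ℤ) - 0 = 1 by norm_num, show (1 : ℤ) - 1 = 0 by norm_num,
        show (1 : ℤ) - 2 = -1 by norm_num, show (1 : ℤ) - 3 = -2 by norm_num,
        hLm2, hL'm2, hLm1, hL'm1]
      simp only [Matrix.add_mulVec, Matrix.sub_mulVec, ← mulVec_mulVec,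
        smul_mulVec, hSw, hTw, hL0, hL'0, mulVec_smul, mulVec_zero,
        hz1, hz1', hσα, zero_smul, smul_zero, add_zero, zero_add, sub_zero, zero_sub,
        Matrix.mulVec_add, Matrix.mulVec_sub, Matrix.mulVec_neg,
        dotProduct_add, dotProduct_sub, dotProduct_smul,
        dotProduct_neg, dotProduct_zero, k10, k10',
        hαβ, hαβ', hβα, hβ'α, neg_zero, mul_zero, zero_mul, smul_eq_mul, sub_self]
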